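/- Let G be a group, K an abelian group with a right G-action by automorphisms, and φ : G → K a bijective 1-cocycle. For any positive integer n, the operation u * v = u^{φ⁻¹(vⁿ)} · v defines a group structure on K. -/

import Mathlib

theorem cocycle_symmetric_power_group_structure (G K : Type*) [Group G] [CommGroup K]
    (act : K → G → K)
    (act_mul : ∀ u v : K, ∀ g : G, act (u * v) g = act u g * act v g)
    (act_comp : ∀ u : K, ∀ g h : G, act u (g * h) = act (act u g) h)
    (act_one : ∀ u : K, act u 1 = u)
    (φ : G → K) (φinv : K → G)
    (hleft : Function.LeftInverse φinv φ) (hright : Function.RightInverse φinv φ)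
    (hcoc : ∀ f g : G, φ (f * g) = act (φ f) g * φ g)
    (n : ℕ) (hn : 0 < n) :
    let star : K → K → K := fun u v => act u (φinv (v ^ n)) * v
    (∀ u v w : K, star (star u v) w = star u (star v w)) ∧
    (∀ u : K, star u 1 = u ∧ star 1 u = u) ∧
    (∀ u : K, ∃ v : K, star u v = 1 ∧ star v u = 1) := by
  intro star
  have act1 : ∀ g : G, act 1 g = 1 := by
    intro g
    have h := act_mul 1 1 g
    simp only [mul_one] at h
    exact (mul_eq_left.mp h.symm)
  have act_pow : ∀ (u : K) (g : G) (k : ℕ), act (u ^ k) g = (act u g) ^ k := by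
    intro u g k
    induction k with
    | zero => simpa using act1 g
    | succ m ih => rw [pow_succ, act_mul, ih, pow_succ]
  have φ1 : φ 1 = 1 := by
    have h := hcoc 1 1
    simp only [mul_one, act_one] at h
    exact (mul_eq_left.mp h.symm)
  have φinv1 : φinv 1 = 1 := by
    have := hleft 1
    rwa [φ1] at this
  have key : ∀ v w : K,
      φinv (v ^ n) * φinv (w ^ n) = φinv ((act v (φinv (w ^ n)) * w) ^ n) := by
    intro v w
    apply hleft.injective
    rw [hright, hcoc, hright, hright, mul_pow, ← act_pow]
  have hassoc : ∀ u v w : K, star (star u v) w = star u (star v w) := by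
    intro u v w
    show act (act u (φinv (v ^ n)) * v) (φinv (w ^ n)) * w
        = act u (φinv ((act v (φinv (w ^ n)) * w) ^ n)) * (act v (φinv (w ^ n)) * w)
    rw [← key, act_mul, act_comp, mul_assoc]
  have hone : ∀ u : K, star u 1 = u ∧ star 1 u = u := by
    intro u
    constructor
    · show act u (φinv (1 ^ n)) * 1 = u
      simp [φinv1, act_one]
    · show act 1 (φinv (u ^ n)) * u = u
      simp [act1]
  refine ⟨hassoc, hone, ?_⟩
  have left_inv : ∀ x : K, ∃ y : K, star y x = 1 := by
    intro x
    refine ⟨act x⁻¹ (φinv (x ^ n))⁻¹, ?_⟩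
    show act (act x⁻¹ (φinv (x ^ n))⁻¹) (φinv (x ^ n)) * x = 1
    rw [← act_comp, inv_mul_cancel, act_one, inv_mul_cancel]
  intro u
  obtain ⟨v, hv⟩ := left_inv u
  obtain ⟨t, ht⟩ := left_inv v
  refine ⟨v, ?_, hv⟩
  calc star u v = star (star t v) (star u v) := by rw [ht, (hone _).2]
    _ = star t (star (star v u) v) := by rw [hassoc, hassoc]
    _ = star t v := by rw [hv, (hone _).2]
    _ = 1 := ht
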